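/- arXiv:1901.09687 — 2 statements merged into one kernel-verified Lean document; each statement's English description precedes it below -/
import Mathlib

section
/- With m = ⌊1/p - 1⌋₂ (the largest power of 2 at most 1/p - 1) and p ∈ (0, 1/2], the zero-error aspect ratio A = 1/m + (1 + log₂ m - 1/m) p satisfies A < 1.11 · H(p), where H(p) = -p log₂ p - (1-p) log₂(1-p) is the binary entropy. Equivalently, the achievable zero-error rate H(p)/A exceeds 0.9 for all p ∈ (0, 1/2]. -/
/-- Binary entropy (in bits). -/
noncomputable def binEnt (p : ℝ) : ℝ := -p * Real.logb 2 p - (1 - p) * Real.logb 2 (1 - p)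

lemma log98_gt : Real.log (9/8) > 0.1177 := by
  have h := Real.abs_log_sub_add_sum_range_le (x := -(1/8)) (by rw [abs_of_nonpos] <;> norm_num) 4
  rw [abs_le] at h
  simp only [Finset.sum_range_succ, Finset.sum_range_zero] at h
  have e : (1 : ℝ) - -(1/8) = 9/8 := by norm_num
  rw [e] at h
  rw [abs_of_nonpos (by norm_num)] at h
  nlinarith [h.1]

lemma log54_gt : Real.log (5/4) > 0.22285 := by
  have h := Real.abs_log_sub_add_sum_range_le (x := -(1/4)) (by rw [abs_of_nonpos] <;> norm_num) 5
  rw [abs_le] at h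
  simp only [Finset.sum_range_succ, Finset.sum_range_zero] at h
  have e : (1 : ℝ) - -(1/4) = 5/4 := by norm_num
  rw [e] at h
  rw [abs_of_nonpos (by norm_num)] at h
  nlinarith [h.1]

lemma h98eq : Real.log (9/8) = 2*Real.log (3/2) - Real.log 2 := by
  rw [show (9:ℝ)/8 = (3/2)^2/2 by norm_num, Real.log_div (by positivity) (by norm_num),
    Real.log_pow]
  push_cast; ring

lemma binEnt_inv_succ (j : ℕ) (n : ℝ) (hn : n = 2^j) :
    binEnt (1/(n+1)) = (j:ℝ)/(n+1) + Real.log ((n+1)/n) / Real.log 2 := by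
  have hn0 : (0:ℝ) < n := by rw [hn]; positivity
  have hN : (0:ℝ) < n+1 := by linarith
  have hl2 : Real.log 2 ≠ 0 := ne_of_gt (Real.log_pos one_lt_two)
  have hlogn : Real.log n = (j:ℝ) * Real.log 2 := by rw [hn, Real.log_pow]
  unfold binEnt
  rw [show (1:ℝ) - 1/(n+1) = n/(n+1) by field_simp; ring]
  rw [Real.logb, Real.logb]
  rw [Real.log_div one_ne_zero (ne_of_gt hN), Real.log_one,
    Real.log_div (ne_of_gt hn0) (ne_of_gt hN),
    Real.log_div (ne_of_gt hN) (ne_of_gt hn0), hlogn]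
  field_simp
  ring

lemma keyP (r : ℝ) (j : ℕ) (hr : r = j) (n : ℝ) (hn : n = 2^j) :
    (r+2)/(n+1) < 1.11 * binEnt (1/(n+1)) := by
  have hn0 : (0:ℝ) < n := by rw [hn]; positivity
  have hn1 : (1:ℝ) ≤ n := by rw [hn]; exact one_le_pow₀ one_le_two
  have hN : (0:ℝ) < n+1 := by linarith
  have hl2 : (0:ℝ) < Real.log 2 := Real.log_pos one_lt_two
  have hL0 : 0 < Real.log ((n+1)/n) := Real.log_pos (by rw [lt_div_iff₀ hn0]; linarith)
  have main : ((j:ℝ)+2)*Real.log 2 < 1.11*((j:ℝ)*Real.log 2 + (n+1)*Real.log ((n+1)/n)) := by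
    rcases lt_or_ge j 4 with hj | hj
    · interval_cases j <;> subst hn <;> norm_num
      · linarith [hl2]
      · linarith [log98_gt, Real.log_two_lt_d9, h98eq]
      · linarith [log54_gt, Real.log_two_lt_d9]
      · linarith [log98_gt, Real.log_two_lt_d9]
    · have hL1 : 1 ≤ (n+1) * Real.log ((n+1)/n) := by
        have h := Real.log_le_sub_one_of_pos (show 0 < n/(n+1) by positivity)
        have e : Real.log (n/(n+1)) = - Real.log ((n+1)/n) := by
          rw [← Real.log_inv]; congr 1; field_simp
        rw [e] at h
        have h2 : 1/(n+1) ≤ Real.log ((n+1)/n) := by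
          have e2 : n/(n+1) - 1 = -(1/(n+1)) := by field_simp; ring
          linarith [e2 ▸ h]
        calc (1:ℝ) = (n+1) * (1/(n+1)) := by field_simp
        _ ≤ (n+1) * Real.log ((n+1)/n) := mul_le_mul_of_nonneg_left h2 (le_of_lt hN)
      have hj4 : (4:ℝ) ≤ (j:ℝ) := by exact_mod_cast hj
      nlinarith [hL1, mul_nonneg (by linarith : (0:ℝ) ≤ (j:ℝ)-4) hl2.le,
        Real.log_two_lt_d9, hl2]
  rw [binEnt_inv_succ j n hn, hr]
  rw [div_add_div _ _ (ne_of_gt hN) (ne_of_gt hl2), ← mul_div_assoc,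
    div_lt_div_iff₀ hN (mul_pos hN hl2)]
  nlinarith [mul_lt_mul_of_pos_right main hN]

/-- With `m = ⌊1/p - 1⌋₂` the largest power of two at most `1/p - 1`, the
zero-error aspect ratio `A = 1/m + (1 + log₂ m - 1/m) p` satisfies
`A < 1.11 H(p)` for all `p ∈ (0, 1/2]`; equivalently the zero-error rate
`H(p)/A` exceeds `0.9`. -/
theorem stmt_9 (p : ℝ) (hp0 : 0 < p) (hp1 : p ≤ 1 / 2) :
    let m : ℝ := 2 ^ ⌊Real.logb 2 (1 / p - 1)⌋
    1 / m + (1 + Real.logb 2 m - 1 / m) * p < 1.11 * binEnt p := by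
  intro m
  have hm0 : m = (2:ℝ) ^ ⌊Real.logb 2 (1 / p - 1)⌋ := rfl
  set x : ℝ := 1/p - 1 with hx
  have hx1 : (1:ℝ) ≤ x := by
    rw [hx]
    have h : (2:ℝ) ≤ 1/p := by rw [le_div_iff₀ hp0]; linarith
    linarith
  have hx0 : (0:ℝ) < x := by linarith
  have hk0 : 0 ≤ ⌊Real.logb 2 x⌋ :=
    Int.floor_nonneg.mpr (Real.logb_nonneg one_lt_two hx1)
  set j : ℕ := (⌊Real.logb 2 x⌋).toNat with hj
  have hkj : (⌊Real.logb 2 x⌋ : ℤ) = (j:ℤ) := (Int.toNat_of_nonneg hk0).symm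
  set n : ℝ := 2^j with hn
  have hmn : m = n := by rw [hm0, hkj, zpow_natCast]
  have hn0 : (0:ℝ) < n := by positivity
  have hn1 : (1:ℝ) ≤ n := one_le_pow₀ one_le_two
  have hlow : ((j:ℝ)) ≤ Real.logb 2 x := by
    have h := Int.floor_le (Real.logb 2 x)
    rw [hkj] at h; exact_mod_cast h
  have hhigh : Real.logb 2 x < (j:ℝ) + 1 := by
    have h := Int.lt_floor_add_one (Real.logb 2 x)
    rw [hkj] at h; exact_mod_cast h
  have h1 : n ≤ x := by
    have h := (Real.rpow_le_rpow_left_iff (by norm_num : (1:ℝ) < 2)).mpr hlow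
    rwa [Real.rpow_logb (by norm_num) (by norm_num) hx0, Real.rpow_natCast] at h
  have h2 : x < 2*n := by
    have h := (Real.rpow_lt_rpow_left_iff (by norm_num : (1:ℝ) < 2)).mpr hhigh
    rw [Real.rpow_logb (by norm_num) (by norm_num) hx0] at h
    calc x < (2:ℝ) ^ ((j:ℝ)+1) := h
    _ = 2*n := by
        rw [show ((j:ℝ)+1) = ((j+1 : ℕ):ℝ) by push_cast; ring, Real.rpow_natCast, pow_succ]
        ring
  have ha : 1/(2*n+1) < p := by
    rw [div_lt_iff₀ (by linarith)]
    have h3 : 1/p < 2*n+1 := by rw [hx] at h2; linarith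
    rw [div_lt_iff₀ hp0] at h3
    linarith
  have hb : p ≤ 1/(n+1) := by
    rw [le_div_iff₀ (by linarith)]
    have h3 : n+1 ≤ 1/p := by rw [hx] at h1; linarith
    rw [le_div_iff₀ hp0] at h3
    linarith
  have hd : (0:ℝ) < 1/(n+1) - 1/(2*n+1) := by
    rw [div_sub_div _ _ (by linarith) (by linarith)]
    apply div_pos (by nlinarith) (by nlinarith)
  set t : ℝ := (p - 1/(2*n+1)) / (1/(n+1) - 1/(2*n+1)) with htdef
  have ht0 : 0 < t := div_pos (by linarith) hd
  have ht1 : t ≤ 1 := (div_le_one hd).mpr (by linarith)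
  have hpe : p = (1-t)*(1/(2*n+1)) + t*(1/(n+1)) := by
    have h := div_mul_cancel₀ (p - 1/(2*n+1)) (ne_of_gt hd)
    linear_combination -h
  have hPb := keyP (j:ℝ) j rfl n hn
  have hPa := keyP ((j:ℝ)+1) (j+1) (by push_cast; ring) (2*n) (by rw [hn, pow_succ]; ring)
  have hl2 : (0:ℝ) < Real.log 2 := Real.log_pos one_lt_two
  have hconc : ConcaveOn ℝ (Set.Icc (0:ℝ) 1) binEnt := by
    have heq : binEnt = (Real.log 2)⁻¹ • Real.binEntropy := by
      funext q
      simp only [binEnt, Real.binEntropy, Real.logb, Real.log_inv, Pi.smul_apply, smul_eq_mul]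
      ring
    rw [heq]
    exact (Real.strictConcave_binEntropy.concaveOn).smul (by positivity)
  have haI : (1/(2*n+1)) ∈ Set.Icc (0:ℝ) 1 :=
    ⟨by positivity, by rw [div_le_one (by linarith)]; linarith⟩
  have hbI : (1/(n+1)) ∈ Set.Icc (0:ℝ) 1 :=
    ⟨by positivity, by rw [div_le_one (by linarith)]; linarith⟩
  have hint := hconc.2 haI hbI (by linarith : (0:ℝ) ≤ 1-t) (le_of_lt ht0) (by ring)
  simp only [smul_eq_mul] at hint
  rw [← hpe] at hint
  rw [hmn]
  have hlogm : Real.logb 2 n = (j:ℝ) := by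
    rw [hn, Real.logb_pow, Real.logb_self_eq_one one_lt_two, mul_one]
  rw [hlogm]
  have hLp : 1/n + (1 + (j:ℝ) - 1/n)*p
      = (1-t)*(((j:ℝ)+1+2)/(2*n+1)) + t*(((j:ℝ)+2)/(n+1)) := by
    rw [hpe]; field_simp; ring
  rw [hLp]
  calc (1-t)*(((j:ℝ)+1+2)/(2*n+1)) + t*(((j:ℝ)+2)/(n+1))
      < (1-t)*(1.11*binEnt (1/(2*n+1))) + t*(1.11*binEnt (1/(n+1))) := by
        have c1 : (1-t)*(((j:ℝ)+1+2)/(2*n+1)) ≤ (1-t)*(1.11*binEnt (1/(2*n+1))) :=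
          mul_le_mul_of_nonneg_left (le_of_lt hPa) (by linarith)
        have c2 : t*(((j:ℝ)+2)/(n+1)) < t*(1.11*binEnt (1/(n+1))) :=
          (mul_lt_mul_iff_right₀ ht0).mpr hPb
        linarith
    _ = 1.11*((1-t)*binEnt (1/(2*n+1)) + t*binEnt (1/(n+1))) := by ring
    _ ≤ 1.11*binEnt p := by linarith
end

section
/- In a Huffman (optimal binary prefix-free) code for the uniform distribution on m symbols, writing m = 2^a + b with 0 ≤ b < 2^a (so a = ⌊log₂ m⌋), exactly m - 2b = 2^a - b codewords have length a and the remaining 2b codewords have length a + 1. -/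
/-- A binary code is prefix-free if no codeword is a prefix of a different
codeword. -/
def PrefixFreeCode {m : ℕ} (c : Fin m → List Bool) : Prop :=
  ∀ i j : Fin m, i ≠ j → ¬ (c i <+: c j)

namespace HuffAux

def val : List Bool → ℕ
  | [] => 0
  | x :: t => (cond x 1 0) * 2 ^ t.length + val t

lemma val_lt (l : List Bool) : val l < 2 ^ l.length := by
  induction l with
  | nil => simp [val]
  | cons x t ih =>
    simp only [val, List.length_cons, pow_succ]
    cases x <;> simp <;> omega

lemma val_append (l s : List Bool) :
    val (l ++ s) = val l * 2 ^ s.length + val s := by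
  induction l with
  | nil => simp [val]
  | cons x t ih =>
    show (cond x 1 0) * 2 ^ (t ++ s).length + val (t ++ s)
      = ((cond x 1 0) * 2 ^ t.length + val t) * 2 ^ s.length + val s
    rw [ih, List.length_append, pow_add]; ring

lemma val_inj : ∀ {l l' : List Bool}, l.length = l'.length → val l = val l' → l = l'
  | [], [], _, _ => rfl
  | x :: t, y :: t', hlen, hval => by
    simp only [List.length_cons, Nat.succ_inj] at hlen
    have h1 := val_lt t
    have h2 := val_lt t'
    simp only [val, hlen] at hval
    have hxy : x = y := by
      cases x <;> cases y <;> simp_all <;> omega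
    subst hxy
    have : val t = val t' := by cases x <;> simp at hval <;> omega
    rw [val_inj hlen this]

lemma val_take (l : List Bool) {t : ℕ} (ht : t ≤ l.length) :
    val (l.take t) = val l / 2 ^ (l.length - t) := by
  have key : val l = 2 ^ (l.length - t) * val (l.take t) + val (l.drop t) := by
    conv_lhs => rw [← List.take_append_drop t l]
    rw [val_append, List.length_drop, mul_comm]
  rw [key, Nat.mul_add_div (Nat.two_pow_pos _),
    Nat.div_eq_of_lt (by simpa using val_lt (l.drop t)), add_zero]

def toBits : ℕ → ℕ → List Bool
  | 0, _ => []
  | L + 1, n => n.testBit L :: toBits L n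

@[simp] lemma toBits_length (L n : ℕ) : (toBits L n).length = L := by
  induction L with
  | zero => rfl
  | succ L ih => simp [toBits, ih]

lemma val_toBits (L n : ℕ) : val (toBits L n) = n % 2 ^ L := by
  induction L with
  | zero => simp [toBits, val, Nat.mod_one]
  | succ L ih =>
    have hmod : n % 2 ^ (L + 1) = n / 2 ^ L % 2 * 2 ^ L + n % 2 ^ L := by
      rw [pow_succ, Nat.mod_mul]; ring
    simp only [toBits, val, toBits_length, ih, Nat.testBit_eq_decide_div_mod_eq, hmod]
    rcases Nat.mod_two_eq_zero_or_one (n / 2 ^ L) with h | h <;> simp [h]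

lemma interval_disjoint {L : ℕ} {l l' : List Bool} (h : ¬ l <+: l')
    (hlen : l.length ≤ l'.length) (hL : l'.length ≤ L) :
    Disjoint
      (Finset.Ico (val l * 2 ^ (L - l.length)) ((val l + 1) * 2 ^ (L - l.length)))
      (Finset.Ico (val l' * 2 ^ (L - l'.length)) ((val l' + 1) * 2 ^ (L - l'.length))) := by
  rw [Finset.disjoint_left]
  rintro x hx hx'
  simp only [Finset.mem_Ico] at hx hx'
  have h1 : x / 2 ^ (L - l.length) = val l := Nat.div_eq_of_lt_le hx.1 hx.2
  have h2 : x / 2 ^ (L - l'.length) = val l' := Nat.div_eq_of_lt_le hx'.1 hx'.2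
  have hsplit : L - l.length = (L - l'.length) + (l'.length - l.length) := by omega
  have h3 : val l = val l' / 2 ^ (l'.length - l.length) := by
    rw [← h1, hsplit, pow_add, ← Nat.div_div_eq_div_mul, h2]
  have h4 : val (l'.take l.length) = val l := by
    rw [val_take l' hlen, ← h3]
  have h5 : (l'.take l.length).length = l.length := by
    simp [hlen]
  exact h ((val_inj h5 h4) ▸ List.take_prefix _ _)

lemma kraft {m L : ℕ} {c : Fin m → List Bool}
    (hpf : ∀ i j : Fin m, i ≠ j → ¬ (c i <+: c j))
    (hL : ∀ i, (c i).length ≤ L) :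
    ∑ i : Fin m, 2 ^ (L - (c i).length) ≤ 2 ^ L := by
  classical
  set I : Fin m → Finset ℕ := fun i =>
    Finset.Ico (val (c i) * 2 ^ (L - (c i).length))
      ((val (c i) + 1) * 2 ^ (L - (c i).length)) with hI
  have hdisj : ∀ i ∈ Finset.univ, ∀ j ∈ (Finset.univ : Finset (Fin m)),
      i ≠ j → Disjoint (I i) (I j) := by
    intro i _ j _ hij
    rcases le_total (c i).length (c j).length with hle | hle
    · exact interval_disjoint (hpf i j hij) hle (hL j)
    · exact (interval_disjoint (hpf j i (Ne.symm hij)) hle (hL i)).symm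
  have hcard : ∀ i, (I i).card = 2 ^ (L - (c i).length) := by
    intro i
    rw [hI]
    simp only [Nat.card_Ico, add_mul, one_mul, Nat.add_sub_cancel_left]
  have hsub : Finset.univ.biUnion I ⊆ Finset.range (2 ^ L) := by
    intro x hx
    simp only [Finset.mem_biUnion, Finset.mem_univ, true_and] at hx
    obtain ⟨i, hxi⟩ := hx
    rw [hI] at hxi
    simp only [Finset.mem_Ico] at hxi
    rw [Finset.mem_range]
    calc x < (val (c i) + 1) * 2 ^ (L - (c i).length) := hxi.2
      _ ≤ 2 ^ (c i).length * 2 ^ (L - (c i).length) :=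
          Nat.mul_le_mul_right _ (val_lt (c i))
      _ = 2 ^ L := by have := hL i; rw [← pow_add]; congr 1; omega
  calc ∑ i : Fin m, 2 ^ (L - (c i).length) = ∑ i : Fin m, (I i).card := by
        simp [hcard]
    _ = (Finset.univ.biUnion I).card := (Finset.card_biUnion hdisj).symm
    _ ≤ (Finset.range (2 ^ L)).card := Finset.card_le_card hsub
    _ = 2 ^ L := Finset.card_range _

lemma length_lower {m a b : ℕ} (hb : b < 2 ^ a) (hm : m = 2 ^ a + b)
    {c : Fin m → List Bool}
    (hpf : ∀ i j : Fin m, i ≠ j → ¬ (c i <+: c j)) :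
    a * m + 2 * b ≤ ∑ i, (c i).length := by
  classical
  set L : ℕ := (Finset.univ.sup fun i : Fin m => (c i).length) + a + 1 with hLdef
  have hL : ∀ i, (c i).length ≤ L := by
    intro i
    exact (Finset.le_sup (f := fun i : Fin m => (c i).length)
      (Finset.mem_univ i)).trans (by omega)
  have hkraft := kraft hpf hL
  have hpt : ∀ ℓ : ℕ, ℓ ≤ L →
      (a + 2) * 2 ^ L ≤ 2 ^ (a + 1) * 2 ^ (L - ℓ) + ℓ * 2 ^ L := by
    intro ℓ hℓ
    by_cases hcase : a + 2 ≤ ℓ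
    · calc (a + 2) * 2 ^ L ≤ ℓ * 2 ^ L := Nat.mul_le_mul_right _ hcase
        _ ≤ _ := Nat.le_add_left _ _
    · have hℓa : ℓ ≤ a + 1 := by omega
      have he : 2 ^ (a + 1) * 2 ^ (L - ℓ) = 2 ^ (a + 1 - ℓ) * 2 ^ L := by
        rw [← pow_add, ← pow_add]; congr 1; omega
      have hpow : a + 2 - ℓ ≤ 2 ^ (a + 1 - ℓ) := by
        have := Nat.lt_two_pow_self (n := a + 1 - ℓ); omega
      rw [he]
      calc (a + 2) * 2 ^ L = ((a + 2 - ℓ) + ℓ) * 2 ^ L := by congr 1; omega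
        _ ≤ (2 ^ (a + 1 - ℓ) + ℓ) * 2 ^ L := Nat.mul_le_mul_right _ (by omega)
        _ = 2 ^ (a + 1 - ℓ) * 2 ^ L + ℓ * 2 ^ L := by ring
  have hsum : (a + 2) * m * 2 ^ L ≤
      2 ^ (a + 1) * (∑ i, 2 ^ (L - (c i).length)) + (∑ i, (c i).length) * 2 ^ L := by
    calc (a + 2) * m * 2 ^ L = ∑ _i : Fin m, (a + 2) * 2 ^ L := by
          rw [Finset.sum_const, Finset.card_univ, Fintype.card_fin, smul_eq_mul]; ring
      _ ≤ ∑ i : Fin m, (2 ^ (a + 1) * 2 ^ (L - (c i).length) + (c i).length * 2 ^ L) :=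
          Finset.sum_le_sum fun i _ => hpt _ (hL i)
      _ = _ := by rw [Finset.sum_add_distrib, ← Finset.mul_sum, ← Finset.sum_mul]
  have hmain : (a + 2) * m * 2 ^ L ≤ (2 ^ (a + 1) + ∑ i, (c i).length) * 2 ^ L := by
    calc (a + 2) * m * 2 ^ L ≤ _ := hsum
      _ ≤ 2 ^ (a + 1) * 2 ^ L + (∑ i, (c i).length) * 2 ^ L :=
          Nat.add_le_add_right (Nat.mul_le_mul_left _ hkraft) _
      _ = _ := by ring
  have hcancel : (a + 2) * m ≤ 2 ^ (a + 1) + ∑ i, (c i).length :=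
    Nat.le_of_mul_le_mul_right hmain (Nat.two_pow_pos _)
  have hexp : (a + 2) * m = a * m + 2 * b + 2 ^ (a + 1) := by
    subst hm; rw [pow_succ]; ring
  omega

end HuffAux

open HuffAux

/-- Huffman coding for the uniform distribution on `m = 2^a + b` symbols
(`0 ≤ b < 2^a`): there is a prefix-free binary code with exactly `2^a - b`
codewords of length `a` and `2b` codewords of length `a + 1`, and this code
minimizes the total codeword length among all prefix-free binary codes with
`m` codewords. -/
theorem stmt_11 (a b m : ℕ) (hb : b < 2 ^ a) (hm : m = 2 ^ a + b) :
    ∃ c : Fin m → List Bool, PrefixFreeCode c ∧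
      (Finset.univ.filter fun i => (c i).length = a).card = 2 ^ a - b ∧
      (Finset.univ.filter fun i => (c i).length = a + 1).card = 2 * b ∧
      ∀ c' : Fin m → List Bool, PrefixFreeCode c' →
        ∑ i, (c i).length ≤ ∑ i, (c' i).length := by
  classical
  have hb' : b ≤ 2 ^ a := le_of_lt hb
  set t := 2 ^ a - b with htdef
  have htm : t ≤ m := by omega
  have h2succ : 2 ^ (a + 1) = 2 * 2 ^ a := by rw [pow_succ]; ring
  set c : Fin m → List Bool :=
    fun i => if (i : ℕ) < t then toBits a i else toBits (a + 1) ((i : ℕ) + t) with hc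
  have hlen : ∀ i : Fin m, (c i).length = if (i : ℕ) < t then a else a + 1 := by
    intro i; rw [hc]; dsimp only; split <;> simp
  have hvs : ∀ i : Fin m, (i : ℕ) < t → val (c i) = i := by
    intro i hi
    rw [hc]; dsimp only; rw [if_pos hi, val_toBits]
    exact Nat.mod_eq_of_lt (by omega)
  have hvl : ∀ i : Fin m, ¬ (i : ℕ) < t → val (c i) = i + t := by
    intro i hi
    rw [hc]; dsimp only; rw [if_neg hi, val_toBits]
    exact Nat.mod_eq_of_lt (by have := i.2; omega)
  have hpf : PrefixFreeCode c := by
    intro i j hij h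
    have hlij := h.length_le
    by_cases hi : (i : ℕ) < t <;> by_cases hj : (j : ℕ) < t
    · have heq := h.sublist.eq_of_length
        (by rw [hlen i, hlen j, if_pos hi, if_pos hj])
      have := congrArg val heq
      rw [hvs i hi, hvs j hj] at this
      exact hij (Fin.ext this)
    · obtain ⟨s, hs⟩ := h
      have hslen : s.length = 1 := by
        have := congrArg List.length hs
        rw [List.length_append, hlen i, hlen j, if_pos hi, if_neg hj] at this
        omega
      have hvlt : val s < 2 := by have := val_lt s; rw [hslen] at this; simpa using this
      have hveq := congrArg val hs
      rw [val_append, hslen, hvs i hi, hvl j hj] at hveq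
      have := i.2
      omega
    · rw [hlen i, hlen j, if_neg hi, if_pos hj] at hlij; omega
    · have heq := h.sublist.eq_of_length
        (by rw [hlen i, hlen j, if_neg hi, if_neg hj])
      have h2 := congrArg val heq
      rw [hvl i hi, hvl j hj] at h2
      exact hij (Fin.ext (by omega))
  have hcard1 : (Finset.univ.filter fun i : Fin m => (i : ℕ) < t).card = t := by
    have hinj : Function.Injective
        (fun x : Fin t => (⟨x.1, lt_of_lt_of_le x.2 htm⟩ : Fin m)) := by
      intro x y hxy
      simp only [Fin.mk.injEq] at hxy
      exact Fin.ext hxy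
    have hmap : (Finset.univ.filter fun i : Fin m => (i : ℕ) < t)
        = Finset.map ⟨_, hinj⟩ Finset.univ := by
      ext i
      simp only [Finset.mem_filter, Finset.mem_univ, true_and, Finset.mem_map,
        Function.Embedding.coeFn_mk]
      constructor
      · intro hi; exact ⟨⟨i, hi⟩, Fin.ext rfl⟩
      · rintro ⟨x, rfl⟩; exact x.2
    rw [hmap, Finset.card_map, Finset.card_univ, Fintype.card_fin]
  have hcard2 : (Finset.univ.filter fun i : Fin m => ¬ (i : ℕ) < t).card = 2 * b := by
    have := Finset.card_filter_add_card_filter_not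
      (s := (Finset.univ : Finset (Fin m))) (p := fun i : Fin m => (i : ℕ) < t)
    rw [hcard1, Finset.card_univ, Fintype.card_fin] at this
    omega
  have hfilt1 : (Finset.univ.filter fun i : Fin m => (c i).length = a)
      = Finset.univ.filter fun i : Fin m => (i : ℕ) < t := by
    apply Finset.filter_congr
    intro i _
    rw [hlen i]
    split <;> simp_all
  have hfilt2 : (Finset.univ.filter fun i : Fin m => (c i).length = a + 1)
      = Finset.univ.filter fun i : Fin m => ¬ (i : ℕ) < t := by
    apply Finset.filter_congr
    intro i _
    rw [hlen i]
    split <;> simp_all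
  have hsum : ∑ i, (c i).length = t * a + (2 * b) * (a + 1) := by
    calc ∑ i, (c i).length = ∑ i : Fin m, (if (i : ℕ) < t then a else a + 1) :=
          Finset.sum_congr rfl fun i _ => hlen i
      _ = t * a + (2 * b) * (a + 1) := by
          rw [Finset.sum_ite, Finset.sum_const, Finset.sum_const, hcard1, hcard2,
            smul_eq_mul, smul_eq_mul]
  refine ⟨c, hpf, ?_, ?_, ?_⟩
  · rw [hfilt1, hcard1]
  · rw [hfilt2, hcard2]
  · intro c' hpf'
    rw [hsum]
    have hlow := length_lower hb hm hpf'
    have hm' : m = t + 2 * b := by omega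
    have hval : t * a + (2 * b) * (a + 1) = a * m + 2 * b := by
      rw [hm']; ring
    omega
end
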